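/- There exist an integer k_0 ≥ 1 and a constant M_1 > 0, independent of k, such that for every integer k ≥ k_0 the polynomial P_N^k has exactly N real roots a_1^k > a_2^k > ⋯ > a_N^k, and for each 1 ≤ j ≤ N these satisfy −r_j < a_j^k and 0 ≤ a_j − a_j^k ≤ M_1/k², where a_1 > a_2 > ⋯ > a_N are the N real roots of P_N. -/

import Mathlib

open Polynomial

open Finset in
lemma prodNeg {ι : Type*} (s : Finset ι) (f : ι → ℝ) (h : ∀ i ∈ s, f i < 0) :
    0 < (-1:ℝ)^s.card * ∏ i ∈ s, f i := by
  classical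
  induction s using Finset.induction with
  | empty => simp
  | @insert x s' hx ih =>
    rw [Finset.card_insert_of_notMem hx, Finset.prod_insert hx]
    have h1 := ih (fun i hi => h i (Finset.mem_insert_of_mem hi))
    have h2 : f x < 0 := h x (Finset.mem_insert_self _ _)
    have : (-1:ℝ)^(s'.card + 1) * (f x * ∏ i ∈ s', f i)
        = (-f x) * ((-1:ℝ)^s'.card * ∏ i ∈ s', f i) := by ring
    rw [this]
    exact mul_pos (by linarith) h1

lemma signProd {ι : Type*} (s : Finset ι) (f : ι → ℝ) (p : ι → Prop) [DecidablePred p]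
    (hneg : ∀ i ∈ s, p i → f i < 0) (hpos : ∀ i ∈ s, ¬ p i → 0 < f i) :
    0 < (-1:ℝ)^(s.filter p).card * ∏ i ∈ s, f i := by
  classical
  rw [← Finset.prod_filter_mul_prod_filter_not s p f, ← mul_assoc]
  have h1 := prodNeg (s.filter p) f (fun i hi => hneg i (Finset.mem_filter.1 hi).1 (Finset.mem_filter.1 hi).2)
  have h2 : 0 < ∏ i ∈ s.filter (fun i => ¬ p i), f i :=
    Finset.prod_pos (fun i hi => hpos i (Finset.mem_filter.1 hi).1 (Finset.mem_filter.1 hi).2)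
  exact mul_pos h1 h2

lemma evalQ (N : ℕ) (r b : Fin N → ℝ) (D E x : ℝ) (hx : ∀ l, x + r l ≠ 0) :
    (((C D + C E * X^2) * ∏ j, (X + C (r j)) -
      ∑ i, C (b i) * ∏ j ∈ Finset.univ.erase i, (X + C (r j))) : Polynomial ℝ).eval x
    = (D + E*x^2 - ∑ i, b i/(x + r i)) * ∏ l, (x + r l) := by
  rw [eval_sub, eval_mul, eval_finset_sum, eval_prod]
  simp only [eval_add, eval_mul, eval_pow, eval_C, eval_X, eval_prod]
  rw [sub_mul, Finset.sum_mul]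
  congr 1
  apply Finset.sum_congr rfl
  intro i _
  rw [← Finset.mul_prod_erase Finset.univ (fun l => x + r l) (Finset.mem_univ i)]
  rw [div_mul_eq_mul_div, mul_comm (x + r i), ← mul_assoc, mul_div_assoc, div_self (hx i), mul_one]

lemma evalQpole (N : ℕ) (r b : Fin N → ℝ) (D E : ℝ) (j : Fin N) :
    (((C D + C E * X^2) * ∏ j, (X + C (r j)) -
      ∑ i, C (b i) * ∏ j ∈ Finset.univ.erase i, (X + C (r j))) : Polynomial ℝ).eval (-(r j))
    = -(b j * ∏ l ∈ Finset.univ.erase j, (r l - r j)) := by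
  rw [eval_sub, eval_mul, eval_finset_sum]
  have h0 : ∀ (s : Finset (Fin N)), j ∈ s → (∏ l ∈ s, (X + C (r l)) : Polynomial ℝ).eval (-(r j)) = 0 := by
    intro s hs
    rw [eval_prod]
    exact Finset.prod_eq_zero hs (by simp)
  rw [h0 Finset.univ (Finset.mem_univ j), mul_zero, zero_sub]
  rw [Finset.sum_eq_single j]
  · rw [eval_mul, eval_C, eval_prod]
    congr 1
    congr 1
    exact Finset.prod_congr rfl (fun l _ => by simp; ring)
  · intro i _ hij
    rw [eval_mul, h0 _ (Finset.mem_erase.2 ⟨hij.symm, Finset.mem_univ j⟩), mul_zero]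
  · intro h; exact absurd (Finset.mem_univ j) h

lemma gmono (N : ℕ) (r b : Fin N → ℝ) (hrm : Monotone r) (hb : ∀ i, 0 < b i)
    (β R ε : ℝ) (hβ : ∀ i, β ≤ b i) (hβ0 : 0 < β) (hR : ∀ i, r i ≤ R) (hR0 : 0 < R)
    (hε0 : 0 < ε) (hε : ε ≤ β/(16*R^3))
    (j : Fin N) (x y : ℝ) (hxj : -(r j) < x) (hxy : x < y) (hyj : ∀ l, l < j → y < -(r l)) :
    (ε*x^2 - ∑ i, b i/(x + r i)) < (ε*y^2 - ∑ i, b i/(y + r i)) ∧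
    (y ≤ R → β/(8*R^2) * (y - x) ≤
      (ε*y^2 - ∑ i, b i/(y + r i)) - (ε*x^2 - ∑ i, b i/(x + r i))) := by
  have hprodpos : ∀ i, 0 < (x + r i) * (y + r i) := by
    intro i
    rcases lt_or_ge i j with h | h
    · have h1 : y + r i < 0 := by have := hyj i h; linarith
      have h2 : x + r i < 0 := by linarith
      exact mul_pos_of_neg_of_neg h2 h1
    · have h1 : 0 < x + r i := by have := hrm h; linarith
      have h2 : 0 < y + r i := by linarith
      exact mul_pos h1 h2
  have hxne : ∀ i, x + r i ≠ 0 := fun i => by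
    intro h; have := hprodpos i; rw [h, zero_mul] at this; exact lt_irrefl 0 this
  have hyne : ∀ i, y + r i ≠ 0 := fun i => by
    intro h; have := hprodpos i; rw [h, mul_zero] at this; exact lt_irrefl 0 this
  have hdiff : (ε*y^2 - ∑ i, b i/(y + r i)) - (ε*x^2 - ∑ i, b i/(x + r i))
      = ε*(y+x)*(y-x) + ∑ i, b i * (y - x) / ((x + r i) * (y + r i)) := by
    have : ∀ i ∈ Finset.univ, b i / (x + r i) - b i / (y + r i)
        = b i * (y - x) / ((x + r i) * (y + r i)) := by
      intro i _
      have h1 := hxne i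
      have h2 := hyne i
      field_simp
      ring
    rw [← Finset.sum_congr rfl this, Finset.sum_sub_distrib]
    ring
  have htpos : ∀ i ∈ Finset.univ, 0 < b i * (y - x) / ((x + r i) * (y + r i)) := by
    intro i _
    exact div_pos (mul_pos (hb i) (by linarith)) (hprodpos i)
  have hsum : b j * (y - x) / ((x + r j) * (y + r j))
      ≤ ∑ i, b i * (y - x) / ((x + r i) * (y + r i)) :=
    Finset.single_le_sum (fun i hi => le_of_lt (htpos i hi)) (Finset.mem_univ j)
  have hrR : r j ≤ R := hR j
  have hxlow : -R < x := by linarith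
  have key : y ≤ R → β/(8*R^2) * (y - x) ≤
      (ε*y^2 - ∑ i, b i/(y + r i)) - (ε*x^2 - ∑ i, b i/(x + r i)) := by
    intro hyR
    have hxj' : 0 < x + r j := by linarith
    have hyj' : 0 < y + r j := by linarith
    have hprodR : (x + r j) * (y + r j) ≤ (2*R)*(2*R) := by
      have h1 : x + r j ≤ 2*R := by linarith
      have h2 : y + r j ≤ 2*R := by linarith
      nlinarith
    have htj : β * (y - x) / (4*R^2) ≤ b j * (y - x) / ((x + r j) * (y + r j)) := by
      apply div_le_div₀ (le_of_lt (mul_pos (lt_of_lt_of_le (hb j) (le_of_eq rfl)) (by linarith)))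
      · exact mul_le_mul_of_nonneg_right (hβ j) (by linarith)
      · exact mul_pos hxj' hyj'
      · nlinarith
    have hyx : 0 < y - x := by linarith
    have hS : β * (y - x) / (4*R^2) ≤ ∑ i, b i * (y - x) / ((x + r i) * (y + r i)) :=
      le_trans htj hsum
    have hE0 : 0 ≤ ε*(y-x)*((y+x)+2*R) :=
      mul_nonneg (mul_pos hε0 hyx).le (by linarith : (0:ℝ) ≤ (y+x)+2*R)
    have hE : -(2*R*ε*(y-x)) ≤ ε*(y+x)*(y-x) := by nlinarith
    have hc : 2*R*(β/(16*R^3)) = β/(8*R^2) := by field_simp; ring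
    have h2R : 2*R*ε ≤ β/(8*R^2) := by
      have := mul_le_mul_of_nonneg_left hε (by positivity : (0:ℝ) ≤ 2*R)
      linarith
    have h2Rε : 2*R*ε*(y-x) ≤ β/(8*R^2)*(y-x) :=
      mul_le_mul_of_nonneg_right h2R hyx.le
    have hq : β*(y-x)/(4*R^2) = 2*(β/(8*R^2)*(y-x)) := by field_simp; ring
    rw [hdiff]
    linarith
  refine ⟨?_, key⟩
  rcases le_or_gt y R with hyR | hyR
  · have := key hyR
    nlinarith [mul_pos (div_pos hβ0 (by nlinarith : (0:ℝ) < 8*R^2)) (sub_pos.2 hxy)]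
  · have hxy0 : 0 < x + y := by linarith
    have : 0 < ε*(y+x)*(y-x) := by
      apply mul_pos (mul_pos hε0 (by linarith)) (by linarith)
    nlinarith [htpos j (Finset.mem_univ j), hsum]

lemma myFactorization (N : ℕ) (r b : Fin N → ℝ) (D : ℝ) (hD : 0 < D)
    (P : Polynomial ℝ)
    (hP : P = C D * ∏ j, (X + C (r j)) -
      ∑ i, C (b i) * ∏ j ∈ Finset.univ.erase i, (X + C (r j)))
    (a : Fin N → ℝ) (hainj : Function.Injective a)
    (haroots : ∀ j, P.eval (a j) = 0) :
    P = C D * ∏ i, (X - C (a i)) := by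
  have hmon : (∏ j, (X + C (r j)) : Polynomial ℝ).Monic :=
    monic_prod_of_monic _ _ (fun i _ => monic_X_add_C _)
  have hmon2 : (∏ i, (X - C (a i)) : Polynomial ℝ).Monic :=
    monic_prod_of_monic _ _ (fun i _ => monic_X_sub_C _)
  have hdeg1 : (∏ j, (X + C (r j)) : Polynomial ℝ).natDegree = N := by
    rw [natDegree_prod _ _ (fun i _ => (monic_X_add_C (r i)).ne_zero)]
    simp [natDegree_X_add_C]
  have hdeg2 : (∏ i, (X - C (a i)) : Polynomial ℝ).natDegree = N := by
    rw [natDegree_prod _ _ (fun i _ => (monic_X_sub_C (a i)).ne_zero)]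
    simp [natDegree_X_sub_C]
  have hdegerase : ∀ i : Fin N,
      (C (b i) * ∏ j ∈ Finset.univ.erase i, (X + C (r j)) : Polynomial ℝ).natDegree < N := by
    intro i
    apply lt_of_le_of_lt (natDegree_C_mul_le _ _)
    rw [natDegree_prod _ _ (fun l _ => (monic_X_add_C (r l)).ne_zero)]
    simp only [natDegree_X_add_C, Finset.sum_const, smul_eq_mul, mul_one]
    rw [Finset.card_erase_of_mem (Finset.mem_univ i), Finset.card_univ, Fintype.card_fin]
    have := i.isLt
    omega
  set Q : Polynomial ℝ := P - C D * ∏ i, (X - C (a i)) with hQ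
  have hQN : Q.natDegree ≤ N := by
    apply le_trans (natDegree_sub_le _ _)
    rw [hP]
    apply max_le
    · apply le_trans (natDegree_sub_le _ _)
      apply max_le
      · exact le_trans (natDegree_C_mul_le _ _) (le_of_eq hdeg1)
      · exact natDegree_sum_le_of_forall_le _ _ (fun i _ => le_of_lt (hdegerase i))
    · exact le_trans (natDegree_C_mul_le _ _) (le_of_eq hdeg2)
  have hQcoeff : Q.coeff N = 0 := by
    rw [hQ, hP]
    simp only [coeff_sub, coeff_C_mul, finset_sum_coeff]
    have c1 : (∏ j, (X + C (r j)) : Polynomial ℝ).coeff N = 1 := by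
      have := hmon.coeff_natDegree
      rwa [hdeg1] at this
    have c2 : (∏ i, (X - C (a i)) : Polynomial ℝ).coeff N = 1 := by
      have := hmon2.coeff_natDegree
      rwa [hdeg2] at this
    have c3 : ∀ i ∈ Finset.univ,
        b i * (∏ j ∈ Finset.univ.erase i, (X + C (r j)) : Polynomial ℝ).coeff N = 0 := by
      intro i _
      have h4 : (∏ j ∈ Finset.univ.erase i, (X + C (r j)) : Polynomial ℝ).coeff N = 0 := by
        apply coeff_eq_zero_of_natDegree_lt
        rw [natDegree_prod _ _ (fun l _ => (monic_X_add_C (r l)).ne_zero)]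
        simp only [natDegree_X_add_C, Finset.sum_const, smul_eq_mul, mul_one]
        rw [Finset.card_erase_of_mem (Finset.mem_univ i), Finset.card_univ, Fintype.card_fin]
        have := i.isLt
        omega
      rw [h4, mul_zero]
    rw [c1, c2, Finset.sum_eq_zero c3]
    ring
  have hQlt : Q.natDegree < N ∨ Q = 0 := by
    rcases eq_or_ne Q 0 with h | h
    · exact Or.inr h
    · left
      rcases lt_or_eq_of_le hQN with h' | h'
      · exact h'
      · exfalso
        have := Polynomial.leadingCoeff_ne_zero.2 h
        rw [Polynomial.leadingCoeff, h'] at this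
        exact this hQcoeff
  have hQ0 : Q = 0 := by
    rcases hQlt with h | h
    · apply Polynomial.eq_zero_of_natDegree_lt_card_of_eval_eq_zero Q hainj
      · intro i
        rw [hQ]
        simp only [eval_sub, eval_mul, eval_C, eval_prod]
        rw [haroots i, Finset.prod_eq_zero (Finset.mem_univ i) (by simp)]
        ring
      · rwa [Fintype.card_fin]
    · exact h
  exact sub_eq_zero.1 hQ0

lemma interlace (N : ℕ) (r b : Fin N → ℝ) (hrm : StrictMono r)
    (hb : ∀ i, 0 < b i) (D : ℝ) (hD : 0 < D) (P : Polynomial ℝ)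
    (hP : P = C D * ∏ j, (X + C (r j)) -
      ∑ i, C (b i) * ∏ j ∈ Finset.univ.erase i, (X + C (r j)))
    (a : Fin N → ℝ) (haanti : StrictAnti a)
    (haroots : ∀ x : ℝ, P.eval x = 0 ↔ ∃ j, x = a j) :
    ∀ j : Fin N, -(r j) < a j ∧ ∀ l, l < j → a j < -(r l) := by
  classical
  have hfact := myFactorization N r b D hD P hP a haanti.injective
    (fun j => (haroots (a j)).2 ⟨j, rfl⟩)
  have hPpole : ∀ j : Fin N, P.eval (-(r j)) = -(b j * ∏ l ∈ Finset.univ.erase j, (r l - r j)) := by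
    intro j
    have h0 : P = (C D + C (0:ℝ) * X^2) * ∏ j, (X + C (r j)) -
        ∑ i, C (b i) * ∏ j ∈ Finset.univ.erase i, (X + C (r j)) := by rw [hP]; simp
    rw [h0]
    exact evalQpole N r b D 0 j
  have hvpos : ∀ j : Fin N, 0 < (-1:ℝ)^(j:ℕ) * ∏ l ∈ Finset.univ.erase j, (r l - r j) := by
    intro j
    have hcard : ((Finset.univ.erase j).filter (fun l => l < j)).card = (j:ℕ) := by
      have h1 : (Finset.univ.erase j).filter (fun l => l < j) = Finset.Iio j := by
        ext l
        simp only [Finset.mem_filter, Finset.mem_erase, Finset.mem_univ, true_and, Finset.mem_Iio,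
          and_true]
        exact ⟨fun h => h.2, fun h => ⟨ne_of_lt h, h⟩⟩
      rw [h1, Fin.card_Iio]
    rw [← hcard]
    apply signProd
    · intro l _ hl; have := hrm hl; linarith
    · intro l hl hnl
      have hlj : l ≠ j := (Finset.mem_erase.1 hl).1
      have := hrm (lt_of_le_of_ne (not_lt.1 hnl) (Ne.symm hlj))
      linarith
  have hPpole_ne : ∀ j : Fin N, P.eval (-(r j)) ≠ 0 := by
    intro j h
    rw [hPpole j] at h
    have h2 := hvpos j
    have hv : ∏ l ∈ Finset.univ.erase j, (r l - r j) = 0 := by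
      rcases mul_eq_zero.1 (neg_eq_zero.1 h) with h' | h'
      · exact absurd h' (ne_of_gt (hb j))
      · exact h'
    rw [hv, mul_zero] at h2
    exact lt_irrefl 0 h2
  have hane : ∀ i j : Fin N, a i ≠ -(r j) := fun i j h =>
    hPpole_ne j (by rw [← h]; exact (haroots _).2 ⟨i, rfl⟩)
  set s : Fin N → ℕ := fun j => (Finset.univ.filter (fun i => -(r j) < a i)).card with hs
  have parity : ∀ j : Fin N, Odd (s j + (j:ℕ)) := by
    intro j
    have hu : 0 < (-1:ℝ)^(s j) * ∏ i, (-(r j) - a i) := by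
      apply signProd
      · intro i _ hi; linarith
      · intro i _ hi
        have := lt_of_le_of_ne (not_lt.1 hi) (hane i j)
        linarith
    have hv := hvpos j
    have heq : D * ∏ i, (-(r j) - a i) = -(b j * ∏ l ∈ Finset.univ.erase j, (r l - r j)) := by
      rw [← hPpole j, hfact]
      simp [eval_prod]
    set u := ∏ i, (-(r j) - a i) with hu'
    set v := ∏ l ∈ Finset.univ.erase j, (r l - r j) with hv'
    have hvne : v ≠ 0 := by
      intro h; rw [h, mul_zero] at hv; exact lt_irrefl 0 hv
    have hv2 : 0 < v^2 := by positivity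
    have hDuv : D*(u*v) = -(b j * v^2) := by
      have := congrArg (fun t => t * v) heq
      nlinarith [this]
    have huv : u*v < 0 := by nlinarith [mul_pos (hb j) hv2]
    have h3 : 0 < (-1:ℝ)^(s j + (j:ℕ)) * (u*v) := by
      have he : (-1:ℝ)^(s j + (j:ℕ)) * (u*v) = ((-1:ℝ)^(s j) * u) * ((-1:ℝ)^(j:ℕ) * v) := by
        rw [pow_add]; ring
      rw [he]
      exact mul_pos hu hv
    rcases Nat.even_or_odd (s j + (j:ℕ)) with he | ho
    · exfalso
      rw [he.neg_one_pow, one_mul] at h3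
      linarith
    · exact ho
  have mono : ∀ j j' : Fin N, j ≤ j' → s j ≤ s j' := by
    intro j j' hjj'
    apply Finset.card_le_card
    apply Finset.monotone_filter_right
    intro i _ hi
    have : r j ≤ r j' := hrm.monotone hjj'
    exact lt_of_le_of_lt (by linarith) hi
  have step : ∀ (n : ℕ) (h1 : n + 1 < N), s ⟨n, by omega⟩ + 1 ≤ s ⟨n+1, h1⟩ := by
    intro n h1
    have hle := mono ⟨n, by omega⟩ ⟨n+1, h1⟩ (by simp [Fin.le_def])
    have p1 := parity ⟨n, by omega⟩
    have p2 := parity ⟨n+1, h1⟩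
    simp only [Fin.val_mk] at p1 p2
    rw [Nat.odd_iff] at p1 p2
    omega
  have lower : ∀ (n : ℕ) (h : n < N), n + 1 ≤ s ⟨n, h⟩ := by
    intro n
    induction n with
    | zero =>
      intro h
      have p := parity ⟨0, h⟩
      simp only [Fin.val_mk] at p
      rw [Nat.odd_iff] at p
      omega
    | succ n ih =>
      intro h
      have h' : n < N := by omega
      have h2 := step n h
      have h3 := ih h'
      omega
  have scard : ∀ (n : ℕ) (h : n < N), s ⟨n, h⟩ ≤ N := by
    intro n h
    calc s ⟨n,h⟩ ≤ Finset.univ.card := Finset.card_filter_le _ _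
    _ = N := by simp
  have upper : ∀ (d n : ℕ) (h : n < N), n + d + 1 = N → s ⟨n, h⟩ ≤ n + 1 := by
    intro d
    induction d with
    | zero =>
      intro n h he
      have := scard n h
      omega
    | succ d ih =>
      intro n h he
      have h1 : n + 1 < N := by omega
      have h2 := step n h1
      have h3 := ih (n+1) h1 (by omega)
      omega
  intro j
  constructor
  · by_contra hcon
    have haj : a j < -(r j) := lt_of_le_of_ne (not_lt.1 hcon) (hane j j)
    have hsub : Finset.univ.filter (fun i => -(r j) < a i) ⊆ Finset.Iio j := by
      intro i hi
      rw [Finset.mem_Iio]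
      by_contra hij
      have : a i ≤ a j := haanti.antitone (not_lt.1 hij)
      have := (Finset.mem_filter.1 hi).2
      linarith
    have hcard : s j ≤ (j:ℕ) := by
      have := Finset.card_le_card hsub
      rwa [Fin.card_Iio] at this
    have := lower (j:ℕ) j.isLt
    have hj : (⟨(j:ℕ), j.isLt⟩ : Fin N) = j := rfl
    rw [hj] at this
    omega
  · intro l hl
    by_contra hcon
    have hal : -(r l) < a j := lt_of_le_of_ne (not_lt.1 hcon) (Ne.symm (hane j l))
    have hsub : Finset.Iic j ⊆ Finset.univ.filter (fun i => -(r l) < a i) := by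
      intro i hi
      rw [Finset.mem_Iic] at hi
      rw [Finset.mem_filter]
      refine ⟨Finset.mem_univ i, ?_⟩
      have : a j ≤ a i := haanti.antitone hi
      linarith
    have hcard : (j:ℕ) + 1 ≤ s l := by
      have := Finset.card_le_card hsub
      rwa [Fin.card_Iic] at this
    have hup := upper (N - 1 - (l:ℕ)) (l:ℕ) l.isLt (by have := l.isLt; omega)
    have hlf : (⟨(l:ℕ), l.isLt⟩ : Fin N) = l := rfl
    rw [hlf] at hup
    have : (l:ℕ) < (j:ℕ) := hl
    omega

lemma vpos (N : ℕ) (r : Fin N → ℝ) (hrm : StrictMono r) (j : Fin N) :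
    0 < (-1:ℝ)^(j:ℕ) * ∏ l ∈ Finset.univ.erase j, (r l - r j) := by
  classical
  have hcard : ((Finset.univ.erase j).filter (fun l => l < j)).card = (j:ℕ) := by
    have h1 : (Finset.univ.erase j).filter (fun l => l < j) = Finset.Iio j := by
      ext l
      simp only [Finset.mem_filter, Finset.mem_erase, Finset.mem_univ, true_and, Finset.mem_Iio,
        and_true]
      exact ⟨fun h => h.2, fun h => ⟨ne_of_lt h, h⟩⟩
    rw [h1, Fin.card_Iio]
  rw [← hcard]
  apply signProd
  · intro l _ hl; have := hrm hl; linarith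
  · intro l hl hnl
    have hlj : l ≠ j := (Finset.mem_erase.1 hl).1
    have := hrm (lt_of_le_of_ne (not_lt.1 hnl) (Ne.symm hlj))
    linarith

lemma finCardLt (N : ℕ) (j : Fin N) :
    (Finset.univ.filter (fun l : Fin N => l < j)).card = (j:ℕ) := by
  have h1 : Finset.univ.filter (fun l : Fin N => l < j) = Finset.Iio j := by
    ext l; simp [Finset.mem_Iio]
  rw [h1, Fin.card_Iio]

set_option maxHeartbeats 3000000 in
theorem stmt_10aux (N : ℕ) (hN : 0 < N) (r b : Fin N → ℝ)
    (hr : ∀ i, 0 < r i) (hrm : StrictMono r) (hb : ∀ i, 0 < b i)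
    (D : ℝ) (hD : 0 < D)
    (P : Polynomial ℝ)
    (hP : P = C D * ∏ j, (X + C (r j)) -
      ∑ i, C (b i) * ∏ j ∈ Finset.univ.erase i, (X + C (r j)))
    (Pk : ℕ → Polynomial ℝ)
    (hPk : ∀ k : ℕ, Pk k =
      (C D + C (((2 * (k : ℝ) - 1) ^ 2)⁻¹) * X ^ 2) * ∏ j, (X + C (r j)) -
      ∑ i, C (b i) * ∏ j ∈ Finset.univ.erase i, (X + C (r j)))
    (a : Fin N → ℝ) (haanti : StrictAnti a)
    (haroots : ∀ x : ℝ, P.eval x = 0 ↔ ∃ j, x = a j) :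
    ∃ k₀ : ℕ, 1 ≤ k₀ ∧ ∃ M₁ : ℝ, 0 < M₁ ∧ ∃ A : ℕ → Fin N → ℝ,
      ∀ k : ℕ, k₀ ≤ k →
        StrictAnti (A k) ∧
        (∀ x : ℝ, (Pk k).eval x = 0 ↔ ∃ j, x = A k j) ∧
        (∀ j : Fin N,
          -(r j) < A k j ∧
          0 ≤ a j - A k j ∧
          a j - A k j ≤ M₁ / (k : ℝ) ^ 2) := by
  classical
  obtain ⟨iβ, -, hiβ⟩ := Finset.exists_min_image Finset.univ b ⟨⟨0,hN⟩, Finset.mem_univ _⟩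
  set β := b iβ with hβdef
  have hβ0 : 0 < β := hb iβ
  have hβ : ∀ i, β ≤ b i := fun i => hiβ i (Finset.mem_univ i)
  obtain ⟨iR, -, hiR⟩ := Finset.exists_max_image Finset.univ r ⟨⟨0,hN⟩, Finset.mem_univ _⟩
  set z0 : Fin N := ⟨0, hN⟩ with hz0
  set R : ℝ := max (r iR) (a z0) + 1 with hRdef
  have hR0 : 0 < R := by
    have h1 := hr iR
    have h2 := le_max_left (r iR) (a z0)
    linarith
  have hRr : ∀ i, r i ≤ R := by
    intro i
    have h1 := hiR i (Finset.mem_univ i)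
    have h2 := le_max_left (r iR) (a z0)
    linarith
  have hRa : ∀ j, a j ≤ R := by
    intro j
    have h0 : z0 ≤ j := by
      rw [Fin.le_def]
      exact Nat.zero_le _
    have h1 : a j ≤ a z0 := haanti.antitone h0
    have h2 := le_max_right (r iR) (a z0)
    linarith
  have hint := interlace N r b hrm hb D hD P hP a haanti haroots
  have haRlow : ∀ j, -R ≤ a j := by
    intro j
    have h1 := (hint j).1
    have h2 := hRr j
    linarith
  refine ⟨⌈16*R^3/β⌉₊ + 1, by omega, 8*R^4/β, by positivity, ?_⟩
  set k₀ := ⌈16*R^3/β⌉₊ + 1 with hk₀def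
  have key : ∀ k : ℕ, ∃ A : Fin N → ℝ, k₀ ≤ k →
      (StrictAnti A ∧ (∀ x : ℝ, (Pk k).eval x = 0 ↔ ∃ j, x = A j) ∧
        ∀ j : Fin N, -(r j) < A j ∧ 0 ≤ a j - A j ∧ a j - A j ≤ (8*R^4/β) / (k:ℝ)^2) := by
    intro k
    by_cases hk : k₀ ≤ k
    swap
    · exact ⟨fun _ => 0, fun h => absurd h hk⟩
    set ε : ℝ := ((2*(k:ℝ)-1)^2)⁻¹ with hεdef
    have hk1 : 1 ≤ k := le_trans (by omega) hk
    have hk1' : (1:ℝ) ≤ (k:ℝ) := by exact_mod_cast hk1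
    have h2k0 : 0 < 2*(k:ℝ)-1 := by linarith
    have hε0 : 0 < ε := by positivity
    have hεk : ε ≤ ((k:ℝ)^2)⁻¹ := by
      apply inv_anti₀ (by positivity) (by nlinarith)
    have hkc : 16*R^3/β ≤ (k:ℝ) := by
      have h1 : (16*R^3/β : ℝ) ≤ (⌈16*R^3/β⌉₊ : ℝ) := Nat.le_ceil _
      have h2 : ((k₀:ℕ) : ℝ) ≤ (k:ℝ) := by exact_mod_cast hk
      rw [hk₀def] at h2
      push_cast at h2
      linarith
    have hεsmall : ε ≤ β/(16*R^3) := by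
      have hk2 : (k:ℝ) ≤ (k:ℝ)^2 := by nlinarith
      have h1 : ((k:ℝ)^2)⁻¹ ≤ (k:ℝ)⁻¹ := inv_anti₀ (by linarith) hk2
      have h2 : (k:ℝ)⁻¹ ≤ β/(16*R^3) := by
        rw [inv_eq_one_div, div_le_div_iff₀ (by linarith) (by positivity)]
        have h3 := mul_le_mul_of_nonneg_right hkc hβ0.le
        rw [div_mul_cancel₀ _ (ne_of_gt hβ0)] at h3
        linarith
      linarith
    set g : ℝ → ℝ := fun x => D + ε*x^2 - ∑ i, b i/(x + r i) with hgdef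
    have hPkQ : Pk k = (C D + C ε * X^2) * ∏ j, (X + C (r j)) -
        ∑ i, C (b i) * ∏ j ∈ Finset.univ.erase i, (X + C (r j)) := hPk k
    have hPkeval : ∀ x : ℝ, (∀ l, x + r l ≠ 0) → (Pk k).eval x = g x * ∏ l, (x + r l) := by
      intro x hx
      rw [hPkQ, evalQ N r b D ε x hx]
    have hPeval : ∀ x : ℝ, (∀ l, x + r l ≠ 0) →
        P.eval x = (D + 0*x^2 - ∑ i, b i/(x + r i)) * ∏ l, (x + r l) := by
      intro x hx
      have h0 : P = (C D + C (0:ℝ) * X^2) * ∏ j, (X + C (r j)) -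
          ∑ i, C (b i) * ∏ j ∈ Finset.univ.erase i, (X + C (r j)) := by rw [hP]; simp
      rw [h0]
      exact evalQ N r b D 0 x hx
    have hPkpole : ∀ j : Fin N, (Pk k).eval (-(r j)) =
        -(b j * ∏ l ∈ Finset.univ.erase j, (r l - r j)) := by
      intro j
      rw [hPkQ]
      exact evalQpole N r b D ε j
    have hPkpole_ne : ∀ j : Fin N, (Pk k).eval (-(r j)) ≠ 0 := by
      intro j h
      rw [hPkpole j] at h
      have h2 := vpos N r hrm j
      have hv : ∏ l ∈ Finset.univ.erase j, (r l - r j) = 0 := by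
        rcases mul_eq_zero.1 (neg_eq_zero.1 h) with h' | h'
        · exact absurd h' (ne_of_gt (hb j))
        · exact h'
      rw [hv, mul_zero] at h2
      exact lt_irrefl 0 h2
    have hane : ∀ j l : Fin N, a j + r l ≠ 0 := by
      intro j l
      rcases lt_or_ge l j with h | h
      · have := (hint j).2 l h
        intro hc; linarith
      · have h1 := (hint j).1
        have h2 : r j ≤ r l := hrm.monotone h
        intro hc; linarith
    have hga : ∀ j : Fin N, g (a j) = ε * (a j)^2 := by
      intro j
      have h1 := hPeval (a j) (hane j)
      have h2 : P.eval (a j) = 0 := (haroots _).2 ⟨j, rfl⟩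
      have h3 : ∏ l, (a j + r l) ≠ 0 := Finset.prod_ne_zero_iff.2 (fun l _ => hane j l)
      have h4 : D + 0*(a j)^2 - ∑ i, b i/(a j + r i) = 0 := by
        rcases mul_eq_zero.1 (h1 ▸ h2) with h' | h'
        · exact h'
        · exact absurd h' h3
      simp only [hgdef]
      linarith
    have hroot : ∀ j : Fin N, ∃ Aj, -(r j) < Aj ∧ Aj ≤ a j ∧ (Pk k).eval Aj = 0 := by
      intro j
      set q : ℝ → ℝ := fun x => (-1:ℝ)^(j:ℕ) * (Pk k).eval x with hqdef
      have hqc : Continuous q := continuous_const.mul (Pk k).continuous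
      have hq1 : q (-(r j)) < 0 := by
        have hv := vpos N r hrm j
        have hbj := hb j
        simp only [hqdef]
        rw [hPkpole j]
        nlinarith
      have hq2 : 0 ≤ q (a j) := by
        have h1 := hPkeval (a j) (hane j)
        have hsign : 0 < (-1:ℝ)^(j:ℕ) * ∏ l, (a j + r l) := by
          rw [← finCardLt N j]
          apply signProd
          · intro l _ hl
            have := (hint j).2 l hl
            linarith
          · intro l _ hl
            have h2 : r j ≤ r l := hrm.monotone (not_lt.1 hl)
            have h3 := (hint j).1
            linarith
        have he : q (a j) = (ε*(a j)^2) * ((-1:ℝ)^(j:ℕ) * ∏ l, (a j + r l)) := by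
          simp only [hqdef]
          rw [h1, hga j]
          ring
        rw [he]
        exact mul_nonneg (by positivity) hsign.le
      have hlt : -(r j) < a j := (hint j).1
      have h0mem : (0:ℝ) ∈ Set.Icc (q (-(r j))) (q (a j)) := ⟨hq1.le, hq2⟩
      obtain ⟨Aj, hAmem, hAq⟩ := intermediate_value_Icc hlt.le hqc.continuousOn h0mem
      have hAroot : (Pk k).eval Aj = 0 := by
        have hne : (-1:ℝ)^(j:ℕ) ≠ 0 := pow_ne_zero _ (by norm_num)
        simp only [hqdef] at hAq
        rcases mul_eq_zero.1 hAq with h' | h'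
        · exact absurd h' hne
        · exact h'
      have hAne : Aj ≠ -(r j) := by
        intro h; rw [h] at hAroot; exact hPkpole_ne j hAroot
      exact ⟨Aj, lt_of_le_of_ne hAmem.1 (Ne.symm hAne), hAmem.2, hAroot⟩
    choose A hA1 hA2 hA3 using hroot
    have hcompA : ∀ j l : Fin N, l < j → A j < -(r l) :=
      fun j l hl => lt_of_le_of_lt (hA2 j) ((hint j).2 l hl)
    have hAne : ∀ j l : Fin N, A j + r l ≠ 0 := by
      intro j l
      rcases lt_or_ge l j with h | h
      · have := hcompA j l h
        intro hc; linarith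
      · have h1 := hA1 j
        have h2 : r j ≤ r l := hrm.monotone h
        intro hc; linarith
    have hgA : ∀ j : Fin N, g (A j) = 0 := by
      intro j
      have h1 := hPkeval (A j) (hAne j)
      have h3 : ∏ l, (A j + r l) ≠ 0 := Finset.prod_ne_zero_iff.2 (fun l _ => hAne j l)
      rcases mul_eq_zero.1 (h1 ▸ hA3 j) with h' | h'
      · exact h'
      · exact absurd h' h3
    have hgm := gmono N r b hrm.monotone hb β R ε hβ hβ0 hRr hR0 hε0 hεsmall
    refine ⟨A, fun _ => ⟨?_, ?_, ?_⟩⟩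
    · intro j j' hjj'
      calc A j' ≤ a j' := hA2 j'
      _ < -(r j) := (hint j').2 j hjj'
      _ < A j := hA1 j
    · intro x
      constructor
      · intro hx
        have hxne : ∀ l, x + r l ≠ 0 := by
          intro l hc
          have hxl : x = -(r l) := by linarith
          rw [hxl] at hx
          exact hPkpole_ne l hx
        have hgx : g x = 0 := by
          have h1 := hPkeval x hxne
          have h3 : ∏ l, (x + r l) ≠ 0 := Finset.prod_ne_zero_iff.2 (fun l _ => hxne l)
          rcases mul_eq_zero.1 (h1 ▸ hx) with h' | h'
          · exact h'
          · exact absurd h' h3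
        have hnotlow : ∃ l, -(r l) < x := by
          by_contra hcon
          push_neg at hcon
          have hneg : ∀ l, x + r l < 0 := by
            intro l
            have h1 := hcon l
            have h2 := hxne l
            rcases lt_or_eq_of_le h1 with h' | h'
            · linarith
            · exact absurd (by linarith) h2
          have hsneg : ∑ i, b i/(x + r i) < 0 := by
            apply Finset.sum_neg (fun i _ => div_neg_of_pos_of_neg (hb i) (hneg i))
            exact ⟨z0, Finset.mem_univ z0⟩
          have hsq : 0 ≤ ε*x^2 := mul_nonneg hε0.le (sq_nonneg x)
          have : 0 < g x := by
            simp only [hgdef]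
            linarith
          linarith
        set T := Finset.univ.filter (fun l : Fin N => -(r l) < x) with hT
        have hTne : T.Nonempty := by
          obtain ⟨l, hl⟩ := hnotlow
          exact ⟨l, Finset.mem_filter.2 ⟨Finset.mem_univ l, hl⟩⟩
        set j' := T.min' hTne with hj'def
        have hj'1 : -(r j') < x := (Finset.mem_filter.1 (T.min'_mem hTne)).2
        have hj'2 : ∀ l, l < j' → x < -(r l) := by
          intro l hl
          have hlT : l ∉ T := fun hmem => absurd (T.min'_le l hmem) (not_le.2 hl)
          have h1 : ¬(-(r l) < x) := fun h => hlT (Finset.mem_filter.2 ⟨Finset.mem_univ l, h⟩)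
          exact lt_of_le_of_ne (not_lt.1 h1) (fun h => hxne l (by linarith))
        refine ⟨j', ?_⟩
        rcases lt_trichotomy x (A j') with h | h | h
        · exfalso
          have := (hgm j' x (A j') hj'1 h (fun l hl => hcompA j' l hl)).1
          have hgAj := hgA j'
          simp only [hgdef] at hgx hgAj
          linarith
        · exact h
        · exfalso
          have := (hgm j' (A j') x (hA1 j') h (fun l hl => hj'2 l hl)).1
          have hgAj := hgA j'
          simp only [hgdef] at hgx hgAj
          linarith
      · rintro ⟨j, rfl⟩
        exact hA3 j
    · intro j
      refine ⟨hA1 j, by linarith [hA2 j], ?_⟩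
      rcases eq_or_lt_of_le (hA2 j) with heq | hlt
      · rw [heq]
        simp only [sub_self]
        positivity
      · have hslope := (hgm j (A j) (a j) (hA1 j) hlt (fun l hl => (hint j).2 l hl)).2 (hRa j)
        have hgaj := hga j
        have hgAj := hgA j
        simp only [hgdef] at hgaj hgAj
        have hsl2 : β/(8*R^2) * (a j - A j) ≤ ε * (a j)^2 := by linarith
        have h1 : (a j)^2 ≤ R^2 := sq_le_sq' (haRlow j) (hRa j)
        have h2 : ε * (a j)^2 ≤ ((k:ℝ)^2)⁻¹ * R^2 :=
          mul_le_mul hεk h1 (sq_nonneg _) (by positivity)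
        have hc0 : 0 < β/(8*R^2) := by positivity
        have hce : β/(8*R^2) * ((8*R^4/β) / (k:ℝ)^2) = ((k:ℝ)^2)⁻¹ * R^2 := by
          field_simp
        have hfin : β/(8*R^2) * (a j - A j) ≤ β/(8*R^2) * ((8*R^4/β) / (k:ℝ)^2) := by
          rw [hce]
          linarith
        exact (mul_le_mul_iff_right₀ hc0).1 hfin
  choose AA hAA using key
  exact ⟨AA, fun k hk => hAA k hk⟩

/-- There exist `k₀ ≥ 1` and `M₁ > 0`, independent of `k`, such that for
every `k ≥ k₀` the polynomial `P_N^k` has exactly `N` real roots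
`a_1^k > a_2^k > ⋯ > a_N^k`, and for each `j` these satisfy `-r_j < a_j^k` and
`0 ≤ a_j - a_j^k ≤ M₁ / k²`, where `a_1 > ⋯ > a_N` are the `N` real roots of `P_N`. -/
theorem stmt_10 (N : ℕ) (hN : 0 < N) (r b : Fin N → ℝ)
    (hr : ∀ i, 0 < r i) (hrm : StrictMono r) (hb : ∀ i, 0 < b i)
    (D : ℝ) (hD : 0 < D)
    (P : Polynomial ℝ)
    (hP : P = C D * ∏ j, (X + C (r j)) -
      ∑ i, C (b i) * ∏ j ∈ Finset.univ.erase i, (X + C (r j)))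
    (Pk : ℕ → Polynomial ℝ)
    (hPk : ∀ k : ℕ, Pk k =
      (C D + C (((2 * (k : ℝ) - 1) ^ 2)⁻¹) * X ^ 2) * ∏ j, (X + C (r j)) -
      ∑ i, C (b i) * ∏ j ∈ Finset.univ.erase i, (X + C (r j)))
    (a : Fin N → ℝ) (haanti : StrictAnti a)
    (haroots : ∀ x : ℝ, P.eval x = 0 ↔ ∃ j, x = a j) :
    ∃ k₀ : ℕ, 1 ≤ k₀ ∧ ∃ M₁ : ℝ, 0 < M₁ ∧ ∃ A : ℕ → Fin N → ℝ,
      ∀ k : ℕ, k₀ ≤ k →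
        StrictAnti (A k) ∧
        (∀ x : ℝ, (Pk k).eval x = 0 ↔ ∃ j, x = A k j) ∧
        (∀ j : Fin N,
          -(r j) < A k j ∧
          0 ≤ a j - A k j ∧
          a j - A k j ≤ M₁ / (k : ℝ) ^ 2) := by
  exact stmt_10aux N hN r b hr hrm hb D hD P hP Pk hPk a haanti haroots
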